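/- arXiv:1406.0155 — 8 statements merged into one kernel-verified Lean document; each statement's English description precedes it below -/
import Mathlib

section
/- Let K₁ and K₂ be finite knowledge bases with K₁ ∩ K₂ = ∅ and such that MUSes(K₁ ∪ K₂) = MUSes(K₁) ⊎ MUSes(K₂) (a disjoint union). Then M is a maximal satisfiable subset of K₁ ∪ K₂ if and only if M = M₁ ∪ M₂ where M₁ is a maximal satisfiable subset of K₁ and M₂ is a maximal satisfiable subset of K₂. -/
inductive PropForm (V : Type) : Type
  | var : V → PropForm V
  | neg : PropForm V → PropForm V
  | conj : PropForm V → PropForm V → PropForm V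
  | disj : PropForm V → PropForm V → PropForm V
  deriving DecidableEq

namespace PropForm
def eval {V : Type} (v : V → Bool) : PropForm V → Bool
  | var p => v p
  | neg f => !(eval v f)
  | conj f g => eval v f && eval v g
  | disj f g => eval v f || eval v g
end PropForm

/-- A finite knowledge base `K` is satisfiable (consistent) if some valuation makes
all its formulas true. -/
def Sat {V : Type} (K : Finset (PropForm V)) : Prop :=
  ∃ v : V → Bool, ∀ f ∈ K, f.eval v = true

/-- `M` is a minimal unsatisfiable set: inconsistent, with every proper subset consistent. -/
def IsMUS {V : Type} (M : Finset (PropForm V)) : Prop :=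
  ¬ Sat M ∧ ∀ M' ⊂ M, Sat M'

/-- The set of minimal unsatisfiable subsets of `K`. -/
def MUSes {V : Type} (K : Finset (PropForm V)) : Set (Finset (PropForm V)) :=
  {M | M ⊆ K ∧ IsMUS M}

/-- `M` is a maximal satisfiable subset of `K`. -/
def IsMSSof {V : Type} [DecidableEq V] (K M : Finset (PropForm V)) : Prop :=
  M ⊆ K ∧ Sat M ∧ ∀ a ∈ K, a ∉ M → ¬ Sat (insert a M)

/-- The set of maximal satisfiable subsets of `K`. -/
def MSSes {V : Type} [DecidableEq V] (K : Finset (PropForm V)) : Set (Finset (PropForm V)) :=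
  {M | IsMSSof K M}


lemma sat_subset {V : Type} {S T : Finset (PropForm V)} (h : S ⊆ T) (hT : Sat T) : Sat S := by
  obtain ⟨v, hv⟩ := hT
  exact ⟨v, fun f hf => hv f (h hf)⟩

lemma exists_mus {V : Type} (S : Finset (PropForm V)) (h : ¬ Sat S) :
    ∃ M, M ⊆ S ∧ IsMUS M := by
  induction S using Finset.strongInduction with
  | _ S ih =>
    by_cases hall : ∀ M' ⊂ S, Sat M'
    · exact ⟨S, subset_rfl, h, hall⟩
    · push_neg at hall
      obtain ⟨M', hsub, hns⟩ := hall
      obtain ⟨M, hM, hmusM⟩ := ih M' hsub hns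
      exact ⟨M, hM.trans hsub.subset, hmusM⟩

lemma sat_iff_parts {V : Type} [DecidableEq V] {K1 K2 : Finset (PropForm V)}
    (hmus : MUSes (K1 ∪ K2) = MUSes K1 ∪ MUSes K2)
    {S : Finset (PropForm V)} (hS : S ⊆ K1 ∪ K2) :
    Sat S ↔ Sat (S ∩ K1) ∧ Sat (S ∩ K2) := by
  constructor
  · intro h
    exact ⟨sat_subset Finset.inter_subset_left h, sat_subset Finset.inter_subset_left h⟩
  · rintro ⟨h1, h2⟩
    by_contra hns
    obtain ⟨M, hMS, hmusM⟩ := exists_mus S hns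
    have hmem : M ∈ MUSes (K1 ∪ K2) := ⟨hMS.trans hS, hmusM⟩
    rw [hmus] at hmem
    rcases hmem with h | h
    · exact hmusM.1 (sat_subset (Finset.subset_inter hMS h.1) h1)
    · exact hmusM.1 (sat_subset (Finset.subset_inter hMS h.1) h2)

theorem stmt3 {V : Type} [DecidableEq V] (K1 K2 : Finset (PropForm V))
    (hdisj : K1 ∩ K2 = ∅)
    (hmus : MUSes (K1 ∪ K2) = MUSes K1 ∪ MUSes K2)
    (hmusdisj : Disjoint (MUSes K1) (MUSes K2)) :
    ∀ M : Finset (PropForm V),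
      IsMSSof (K1 ∪ K2) M ↔
        ∃ M1 M2, IsMSSof K1 M1 ∧ IsMSSof K2 M2 ∧ M = M1 ∪ M2 := by
  intro M
  have hd : ∀ x, x ∈ K1 → x ∈ K2 → False := by
    intro x h1 h2
    have : x ∈ K1 ∩ K2 := Finset.mem_inter.mpr ⟨h1, h2⟩
    simp [hdisj] at this
  constructor
  · rintro ⟨hsub, hsat, hmax⟩
    refine ⟨M ∩ K1, M ∩ K2, ⟨Finset.inter_subset_right, ?_, ?_⟩,
      ⟨Finset.inter_subset_right, ?_, ?_⟩, ?_⟩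
    · exact sat_subset Finset.inter_subset_left hsat
    · intro a haK1 haM1
      have haM : a ∉ M := fun hm => haM1 (Finset.mem_inter.mpr ⟨hm, haK1⟩)
      have hins : ¬ Sat (insert a M) :=
        hmax a (Finset.mem_union_left _ haK1) haM
      intro hsat1
      apply hins
      rw [sat_iff_parts hmus (by
        intro x hx
        rcases Finset.mem_insert.mp hx with rfl | hx
        · exact Finset.mem_union_left _ haK1
        · exact hsub hx)]
      constructor
      · have : insert a M ∩ K1 = insert a (M ∩ K1) := by
          ext x
          simp only [Finset.mem_inter, Finset.mem_insert]
          constructor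
          · rintro ⟨rfl | hx, hk⟩
            · exact Or.inl rfl
            · exact Or.inr ⟨hx, hk⟩
          · rintro (rfl | ⟨hx, hk⟩)
            · exact ⟨Or.inl rfl, haK1⟩
            · exact ⟨Or.inr hx, hk⟩
        rw [this]; exact hsat1
      · have : insert a M ∩ K2 = M ∩ K2 := by
          ext x
          simp only [Finset.mem_inter, Finset.mem_insert]
          constructor
          · rintro ⟨h | hx, hk⟩
            · exact absurd (h ▸ hk) (fun hk => hd a haK1 hk)
            · exact ⟨hx, hk⟩
          · rintro ⟨hx, hk⟩
            exact ⟨Or.inr hx, hk⟩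
        rw [this]
        exact sat_subset Finset.inter_subset_left hsat
    · exact sat_subset Finset.inter_subset_left hsat
    · intro a haK2 haM2
      have haM : a ∉ M := fun hm => haM2 (Finset.mem_inter.mpr ⟨hm, haK2⟩)
      have hins : ¬ Sat (insert a M) :=
        hmax a (Finset.mem_union_right _ haK2) haM
      intro hsat2
      apply hins
      rw [sat_iff_parts hmus (by
        intro x hx
        rcases Finset.mem_insert.mp hx with rfl | hx
        · exact Finset.mem_union_right _ haK2
        · exact hsub hx)]
      constructor
      · have : insert a M ∩ K1 = M ∩ K1 := by
          ext x
          simp only [Finset.mem_inter, Finset.mem_insert]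
          constructor
          · rintro ⟨h | hx, hk⟩
            · exact absurd (h ▸ hk) (fun hk => hd a hk haK2)
            · exact ⟨hx, hk⟩
          · rintro ⟨hx, hk⟩
            exact ⟨Or.inr hx, hk⟩
        rw [this]
        exact sat_subset Finset.inter_subset_left hsat
      · have : insert a M ∩ K2 = insert a (M ∩ K2) := by
          ext x
          simp only [Finset.mem_inter, Finset.mem_insert]
          constructor
          · rintro ⟨rfl | hx, hk⟩
            · exact Or.inl rfl
            · exact Or.inr ⟨hx, hk⟩
          · rintro (rfl | ⟨hx, hk⟩)
            · exact ⟨Or.inl rfl, haK2⟩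
            · exact ⟨Or.inr hx, hk⟩
        rw [this]; exact hsat2
    · ext x
      simp only [Finset.mem_union, Finset.mem_inter]
      constructor
      · intro hx
        rcases Finset.mem_union.mp (hsub hx) with h | h
        · exact Or.inl ⟨hx, h⟩
        · exact Or.inr ⟨hx, h⟩
      · rintro (⟨hx, _⟩ | ⟨hx, _⟩) <;> exact hx
  · rintro ⟨M1, M2, ⟨hs1, hsat1, hmax1⟩, ⟨hs2, hsat2, hmax2⟩, rfl⟩
    have hMsub : M1 ∪ M2 ⊆ K1 ∪ K2 := Finset.union_subset_union hs1 hs2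
    have hi1 : (M1 ∪ M2) ∩ K1 = M1 := by
      ext x
      simp only [Finset.mem_inter, Finset.mem_union]
      constructor
      · rintro ⟨h1 | h2, hk⟩
        · exact h1
        · exact absurd (hd x hk (hs2 h2)) (fun h => h)
      · intro hx
        exact ⟨Or.inl hx, hs1 hx⟩
    have hi2 : (M1 ∪ M2) ∩ K2 = M2 := by
      ext x
      simp only [Finset.mem_inter, Finset.mem_union]
      constructor
      · rintro ⟨h1 | h2, hk⟩
        · exact absurd (hd x (hs1 h1) hk) (fun h => h)
        · exact h2
      · intro hx
        exact ⟨Or.inr hx, hs2 hx⟩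
    refine ⟨hMsub, ?_, ?_⟩
    · rw [sat_iff_parts hmus hMsub, hi1, hi2]
      exact ⟨hsat1, hsat2⟩
    · intro a haK haM
      rcases Finset.mem_union.mp haK with haK1 | haK2
      · have ha1 : a ∉ M1 := fun h => haM (Finset.mem_union_left _ h)
        have hins := hmax1 a haK1 ha1
        intro hsat
        apply hins
        have hsub' : insert a M1 ⊆ insert a (M1 ∪ M2) := by
          intro x hx
          rcases Finset.mem_insert.mp hx with rfl | hx
          · exact Finset.mem_insert_self _ _
          · exact Finset.mem_insert_of_mem (Finset.mem_union_left _ hx)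
        exact sat_subset hsub' hsat
      · have ha2 : a ∉ M2 := fun h => haM (Finset.mem_union_right _ h)
        have hins := hmax2 a haK2 ha2
        intro hsat
        apply hins
        have hsub' : insert a M2 ⊆ insert a (M1 ∪ M2) := by
          intro x hx
          rcases Finset.mem_insert.mp hx with rfl | hx
          · exact Finset.mem_insert_self _ _
          · exact Finset.mem_insert_of_mem (Finset.mem_union_right _ hx)
        exact sat_subset hsub' hsat
end

section
/- Every inconsistent finite knowledge base K has a unique MUS-decomposition, i.e., a unique family {K₁, …, Kₚ} such that K = K₁ ∪ ⋯ ∪ Kₚ ∪ free(K) and the sets MUSes(Kᵢ) are exactly the connected components of the MUS-graph of K. -/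
/-- The MUS-graph of `K`: vertices are the MUSes of `K`, with an edge between two
distinct MUSes iff they intersect. -/
def MUSGraph {V : Type} [DecidableEq V] (K : Finset (PropForm V)) :
    SimpleGraph {M : Finset (PropForm V) // M ∈ MUSes K} :=
  SimpleGraph.fromRel fun M M' => (M.1 ∩ M'.1).Nonempty

/-- The set of MUSes lying in the connected component `c` of the MUS-graph of `K`. -/
def compMUSes {V : Type} [DecidableEq V] (K : Finset (PropForm V))
    (c : (MUSGraph K).ConnectedComponent) : Set (Finset (PropForm V)) :=
  {M | ∃ h : M ∈ MUSes K, (MUSGraph K).connectedComponentMk ⟨M, h⟩ = c}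

/-- The free formulas of `K`: those belonging to no MUS of `K`. -/
def freeSet {V : Type} (K : Finset (PropForm V)) : Set (PropForm V) :=
  {a | a ∈ K ∧ ∀ M ∈ MUSes K, a ∉ M}

/-- `D` is a MUS-decomposition of `K`: `K` is the union of the members of `D` together
with the free formulas, each member is a union of its own MUSes, and the families
`MUSes Ki` for `Ki ∈ D` are exactly the connected components of the MUS-graph of `K`. -/
def IsMUSdecomp {V : Type} [DecidableEq V] (K : Finset (PropForm V))
    (D : Set (Finset (PropForm V))) : Prop :=
  ((↑K : Set (PropForm V)) = (⋃ Ki ∈ D, (↑Ki : Set (PropForm V))) ∪ freeSet K) ∧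
  (∀ Ki ∈ D, (↑Ki : Set (PropForm V)) = ⋃ M ∈ MUSes Ki, (↑M : Set (PropForm V))) ∧
  (∀ Ki ∈ D, ∃ c, MUSes Ki = compMUSes K c) ∧
  (∀ c, ∃ Ki ∈ D, MUSes Ki = compMUSes K c)

attribute [local instance] Classical.propDecidable

noncomputable def Kcomp {V : Type} [DecidableEq V] (K : Finset (PropForm V))
    (c : (MUSGraph K).ConnectedComponent) : Finset (PropForm V) :=
  K.filter (fun a => ∃ M ∈ compMUSes K c, a ∈ M)

lemma coe_Kcomp {V : Type} [DecidableEq V] (K : Finset (PropForm V))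
    (c : (MUSGraph K).ConnectedComponent) :
    (↑(Kcomp K c) : Set (PropForm V)) = ⋃ M ∈ compMUSes K c, (↑M : Set (PropForm V)) := by
  ext a
  simp only [Set.mem_iUnion, Finset.mem_coe, Kcomp, Finset.coe_filter, Set.mem_setOf_eq]
  constructor
  · rintro ⟨-, M, hM, haM⟩; exact ⟨M, hM, haM⟩
  · rintro ⟨M, hM, haM⟩
    exact ⟨hM.1.1 haM, M, hM, haM⟩

lemma sat_empty {V : Type} : Sat (∅ : Finset (PropForm V)) :=
  ⟨fun _ => true, by simp⟩

lemma muses_Kcomp {V : Type} [DecidableEq V] (K : Finset (PropForm V))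
    (c : (MUSGraph K).ConnectedComponent) :
    MUSes (Kcomp K c) = compMUSes K c := by
  ext M
  constructor
  · rintro ⟨hsub, hmus⟩
    have hMK : M ∈ MUSes K := ⟨hsub.trans (Finset.filter_subset _ _), hmus⟩
    -- M is nonempty
    have hne : M.Nonempty := by
      rcases Finset.eq_empty_or_nonempty M with rfl | hne
      · exact absurd sat_empty hmus.1
      · exact hne
    obtain ⟨a, haM⟩ := hne
    have := hsub haM
    simp only [Kcomp, Finset.mem_filter] at this
    obtain ⟨-, M', hM', haM'⟩ := this
    obtain ⟨hM'K, hc⟩ := hM'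
    refine ⟨hMK, ?_⟩
    rw [← hc]
    by_cases heq : M = M'
    · congr 1
      exact Subtype.ext heq
    · apply SimpleGraph.ConnectedComponent.sound
      apply SimpleGraph.Adj.reachable
      rw [MUSGraph, SimpleGraph.fromRel_adj]
      exact ⟨fun hx => heq (congrArg Subtype.val hx),
        Or.inl ⟨a, Finset.mem_inter.2 ⟨haM, haM'⟩⟩⟩
  · rintro ⟨hMK, hc⟩
    refine ⟨?_, hMK.2⟩
    intro a haM
    simp only [Kcomp, Finset.mem_filter]
    exact ⟨hMK.1 haM, M, ⟨hMK, hc⟩, haM⟩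

theorem stmt5 {V : Type} [DecidableEq V] (K : Finset (PropForm V)) (h : ¬ Sat K) :
    ∃! D : Set (Finset (PropForm V)), IsMUSdecomp K D := by
  refine ⟨Set.range (Kcomp K), ⟨?_, ?_, ?_, ?_⟩, ?_⟩
  · -- K = union ∪ free
    ext a
    simp only [Finset.mem_coe, Set.mem_union, Set.mem_iUnion, Set.mem_range,
      exists_prop, exists_exists_eq_and]
    constructor
    · intro haK
      by_cases hfree : ∀ M ∈ MUSes K, a ∉ M
      · exact Or.inr ⟨haK, hfree⟩
      · push_neg at hfree
        obtain ⟨M, hM, haM⟩ := hfree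
        refine Or.inl ⟨(MUSGraph K).connectedComponentMk ⟨M, hM⟩, ?_⟩
        simp only [Kcomp, Finset.mem_filter]
        exact ⟨haK, M, ⟨hM, rfl⟩, haM⟩
    · rintro (⟨c, hc⟩ | hfree)
      · exact Finset.filter_subset _ _ hc
      · exact hfree.1
  · rintro Ki ⟨c, rfl⟩
    rw [coe_Kcomp, muses_Kcomp]
  · rintro Ki ⟨c, rfl⟩
    exact ⟨c, muses_Kcomp K c⟩
  · intro c
    exact ⟨Kcomp K c, ⟨c, rfl⟩, muses_Kcomp K c⟩
  · -- uniqueness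
    rintro D ⟨hcover, hunion, hto, hfrom⟩
    have key : ∀ Ki ∈ D, ∀ c, MUSes Ki = compMUSes K c → Ki = Kcomp K c := by
      intro Ki hKi c hc
      apply Finset.coe_injective
      rw [hunion Ki hKi, hc, coe_Kcomp]
    ext S
    simp only [Set.mem_range]
    constructor
    · intro hS
      obtain ⟨c, hc⟩ := hto S hS
      exact ⟨c, (key S hS c hc).symm⟩
    · rintro ⟨c, rfl⟩
      obtain ⟨Ki, hKi, hc⟩ := hfrom c
      rw [← key Ki hKi c hc]
      exact hKi
end

section
/- The inconsistency measure I_M defined by I_M(K) = |MSSes(K)| + |selfC(K)| − 1 does not satisfy the Independent Decomposability property: for K₁ = {a, ¬a} and K₂ = {b, ¬b} with distinct propositional variables a, b, the preconditions of Independent Decomposability hold for K₁, K₂, but I_M(K₁ ∪ K₂) = 3 while I_M(K₁) + I_M(K₂) = 2. -/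
/-- The unfree formulas of `K`: those belonging to some MUS of `K`. -/
def unfree {V : Type} (K : Finset (PropForm V)) : Set (PropForm V) :=
  ⋃ M ∈ MUSes K, (↑M : Set (PropForm V))

/-- Self-contradictory formulas of `K`. -/
def selfC {V : Type} (K : Finset (PropForm V)) : Set (PropForm V) :=
  {a | a ∈ K ∧ ¬ Sat {a}}

/-- The measure `I_M(K) = |MSSes(K)| + |selfC(K)| - 1`. -/
noncomputable def IM {V : Type} [DecidableEq V] (K : Finset (PropForm V)) : ℤ :=
  ((MSSes K).ncard : ℤ) + ((selfC K).ncard : ℤ) - 1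

section Helpers

open PropForm

variable {V : Type} [DecidableEq V]

lemma unsat_both {M : Finset (PropForm V)} {x : V}
    (h1 : var x ∈ M) (h2 : neg (var x) ∈ M) : ¬ Sat M := by
  rintro ⟨v, hv⟩
  have ha := hv _ h1
  have hb := hv _ h2
  simp [eval] at ha hb
  rw [ha] at hb
  simp at hb

lemma sat_lit {M : Finset (PropForm V)}
    (hM : ∀ f ∈ M, ∃ x : V, (f = var x ∧ neg (var x) ∉ M) ∨ f = neg (var x)) :
    Sat M := by
  refine ⟨fun x => if neg (var x) ∈ M then false else true, ?_⟩
  intro f hf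
  obtain ⟨x, h | h⟩ := hM f hf
  · simp [h.1, eval, h.2]
  · subst h; simp_all [eval]

lemma sat_of_ssubset_pair {M : Finset (PropForm V)} {x : V}
    (h : M ⊂ ({var x, neg (var x)} : Finset (PropForm V))) : Sat M := by
  apply sat_lit
  intro f hf
  have hm := h.1 hf
  simp only [Finset.mem_insert, Finset.mem_singleton] at hm
  refine ⟨x, ?_⟩
  rcases hm with rfl | rfl
  · left
    refine ⟨rfl, fun hn => ?_⟩
    exact h.2 (by simp [Finset.insert_subset_iff, hf, hn])
  · right; rfl

lemma isMUS_pair (x : V) : IsMUS ({var x, neg (var x)} : Finset (PropForm V)) := by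
  constructor
  · exact unsat_both (x := x) (by simp) (by simp)
  · intro M' hM'
    exact sat_of_ssubset_pair hM'

lemma muses_pair (x : V) :
    MUSes ({var x, neg (var x)} : Finset (PropForm V)) =
      {({var x, neg (var x)} : Finset (PropForm V))} := by
  ext M
  simp only [MUSes, Set.mem_setOf_eq, Set.mem_singleton_iff]
  constructor
  · rintro ⟨hsub, hunsat, _⟩
    by_contra hne
    exact hunsat (sat_of_ssubset_pair (lt_of_le_of_ne hsub hne))
  · rintro rfl
    exact ⟨le_refl _, isMUS_pair x⟩

lemma eq_single_of {α : Type} [DecidableEq α] {M : Finset α} {p q : α}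
    (hsub : ∀ f ∈ M, f = p ∨ f = q)
    (hp : p ∈ M) (hq : q ∉ M) : M = {p} := by
  ext f
  simp only [Finset.mem_singleton]
  constructor
  · intro hf; rcases hsub f hf with rfl | rfl
    · rfl
    · exact absurd hf hq
  · rintro rfl; exact hp

lemma eq_pair_of {α : Type} [DecidableEq α] {M : Finset α} {p q r s : α}
    (hsub : ∀ f ∈ M, f = p ∨ f = q ∨ f = r ∨ f = s)
    (hp : p ∈ M) (hq : q ∉ M) (hr : r ∈ M) (hs : s ∉ M) : M = {p, r} := by
  ext f
  simp only [Finset.mem_insert, Finset.mem_singleton]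
  constructor
  · intro hf; rcases hsub f hf with rfl | rfl | rfl | rfl
    · exact Or.inl rfl
    · exact absurd hf hq
    · exact Or.inr rfl
    · exact absurd hf hs
  · rintro (rfl | rfl) <;> assumption

lemma sat_of_not_pairs {M : Finset (PropForm V)} {x y : V}
    (hsub : ∀ f ∈ M, f = var x ∨ f = neg (var x) ∨ f = var y ∨ f = neg (var y))
    (hx : ¬ (var x ∈ M ∧ neg (var x) ∈ M))
    (hy : ¬ (var y ∈ M ∧ neg (var y) ∈ M)) : Sat M := by
  apply sat_lit
  intro f hf
  rcases hsub f hf with rfl | rfl | rfl | rfl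
  · exact ⟨x, Or.inl ⟨rfl, fun hn => hx ⟨hf, hn⟩⟩⟩
  · exact ⟨x, Or.inr rfl⟩
  · exact ⟨y, Or.inl ⟨rfl, fun hn => hy ⟨hf, hn⟩⟩⟩
  · exact ⟨y, Or.inr rfl⟩

lemma muses_four (x y : V) :
    MUSes (({var x, neg (var x)} : Finset (PropForm V)) ∪ {var y, neg (var y)}) =
      {({var x, neg (var x)} : Finset (PropForm V)),
       ({var y, neg (var y)} : Finset (PropForm V))} := by
  ext M
  simp only [MUSes, Set.mem_setOf_eq, Set.mem_insert_iff, Set.mem_singleton_iff]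
  constructor
  · rintro ⟨hsub, hunsat, hmin⟩
    have hsub' : ∀ f ∈ M, f = var x ∨ f = neg (var x) ∨ f = var y ∨ f = neg (var y) := by
      intro f hf
      have := hsub hf
      simp only [Finset.mem_union, Finset.mem_insert, Finset.mem_singleton] at this
      tauto
    by_cases hx : var x ∈ M ∧ neg (var x) ∈ M
    · left
      by_contra hne
      have hss : ({var x, neg (var x)} : Finset (PropForm V)) ⊂ M :=
        lt_of_le_of_ne (by simp [Finset.insert_subset_iff, hx.1, hx.2]) (Ne.symm hne)
      exact unsat_both (x := x) (by simp) (by simp) (hmin _ hss)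
    by_cases hy : var y ∈ M ∧ neg (var y) ∈ M
    · right
      by_contra hne
      have hss : ({var y, neg (var y)} : Finset (PropForm V)) ⊂ M :=
        lt_of_le_of_ne (by simp [Finset.insert_subset_iff, hy.1, hy.2]) (Ne.symm hne)
      exact unsat_both (x := y) (by simp) (by simp) (hmin _ hss)
    · exact absurd (sat_of_not_pairs hsub' hx hy) hunsat
  · rintro (rfl | rfl)
    · refine ⟨?_, isMUS_pair x⟩
      intro f hf
      simp only [Finset.mem_union, Finset.mem_insert, Finset.mem_singleton] at hf ⊢
      tauto
    · refine ⟨?_, isMUS_pair y⟩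
      intro f hf
      simp only [Finset.mem_union, Finset.mem_insert, Finset.mem_singleton] at hf ⊢
      tauto

lemma sat_single_var (x : V) : Sat ({var x} : Finset (PropForm V)) := by
  apply sat_lit
  intro f hf
  simp only [Finset.mem_singleton] at hf
  exact ⟨x, Or.inl ⟨hf, by simp⟩⟩

lemma sat_single_neg (x : V) : Sat ({neg (var x)} : Finset (PropForm V)) := by
  apply sat_lit
  intro f hf
  simp only [Finset.mem_singleton] at hf
  exact ⟨x, Or.inr hf⟩

lemma msses_pair (x : V) :
    MSSes ({var x, neg (var x)} : Finset (PropForm V)) =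
      {({var x} : Finset (PropForm V)), ({neg (var x)} : Finset (PropForm V))} := by
  ext M
  simp only [MSSes, IsMSSof, Set.mem_setOf_eq, Set.mem_insert_iff, Set.mem_singleton_iff]
  constructor
  · rintro ⟨hsub, hsat, hmax⟩
    have hsub' : ∀ f ∈ M, f = var x ∨ f = neg (var x) := by
      intro f hf; have := hsub hf; simpa using this
    have hnb : ¬ (var x ∈ M ∧ neg (var x) ∈ M) := fun h => unsat_both h.1 h.2 hsat
    by_cases hv : var x ∈ M
    · left
      exact eq_single_of hsub' hv (fun hn => hnb ⟨hv, hn⟩)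
    · have hn : neg (var x) ∈ M := by
        by_contra hn
        apply hmax (var x) (by simp) hv
        apply sat_lit
        intro f hf
        simp only [Finset.mem_insert] at hf
        rcases hf with rfl | hf
        · exact ⟨x, Or.inl ⟨rfl, by simp [hn]⟩⟩
        · rcases hsub' f hf with rfl | rfl
          · exact ⟨x, Or.inl ⟨rfl, by simp [hn]⟩⟩
          · exact ⟨x, Or.inr rfl⟩
      right
      exact eq_single_of (fun f hf => (hsub' f hf).symm) hn hv
  · rintro (rfl | rfl)
    · refine ⟨by simp, sat_single_var x, ?_⟩
      intro c hc hcm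
      simp only [Finset.mem_insert, Finset.mem_singleton] at hc
      rcases hc with rfl | rfl
      · simp at hcm
      · exact unsat_both (x := x) (by simp) (by simp)
    · refine ⟨by simp, sat_single_neg x, ?_⟩
      intro c hc hcm
      simp only [Finset.mem_insert, Finset.mem_singleton] at hc
      rcases hc with rfl | rfl
      · exact unsat_both (x := x) (by simp) (by simp)
      · simp at hcm

lemma msses_four {x y : V} (hxy : x ≠ y) :
    MSSes (({var x, neg (var x)} : Finset (PropForm V)) ∪ {var y, neg (var y)}) =
      {({var x, var y} : Finset (PropForm V)), {var x, neg (var y)},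
       {neg (var x), var y}, {neg (var x), neg (var y)}} := by
  have hvv : (var x : PropForm V) ≠ var y := by simp [hxy]
  ext M
  simp only [MSSes, IsMSSof, Set.mem_setOf_eq, Set.mem_insert_iff, Set.mem_singleton_iff]
  constructor
  · rintro ⟨hsub, hsat, hmax⟩
    have hsub' : ∀ f ∈ M, f = var x ∨ f = neg (var x) ∨ f = var y ∨ f = neg (var y) := by
      intro f hf; have := hsub hf
      simp only [Finset.mem_union, Finset.mem_insert, Finset.mem_singleton] at this
      tauto
    have hnx : ¬ (var x ∈ M ∧ neg (var x) ∈ M) := fun h => unsat_both h.1 h.2 hsat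
    have hny : ¬ (var y ∈ M ∧ neg (var y) ∈ M) := fun h => unsat_both h.1 h.2 hsat
    -- at least one of each pair is in M
    have hex : var x ∈ M ∨ neg (var x) ∈ M := by
      by_contra hno
      push_neg at hno
      apply hmax (var x) (by simp) hno.1
      apply sat_of_not_pairs (x := x) (y := y)
      · intro f hf
        simp only [Finset.mem_insert] at hf
        rcases hf with rfl | hf
        · exact Or.inl rfl
        · exact hsub' f hf
      · simp [hno.2]
      · intro h
        simp only [Finset.mem_insert] at h
        rcases h with ⟨h1 | h1, h2 | h2⟩ <;> simp_all
    have hey : var y ∈ M ∨ neg (var y) ∈ M := by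
      by_contra hno
      push_neg at hno
      apply hmax (var y) (by simp) hno.1
      apply sat_of_not_pairs (x := x) (y := y)
      · intro f hf
        simp only [Finset.mem_insert] at hf
        rcases hf with rfl | hf
        · exact Or.inr (Or.inr (Or.inl rfl))
        · exact hsub' f hf
      · intro h
        simp only [Finset.mem_insert] at h
        rcases h with ⟨h1 | h1, h2 | h2⟩ <;> simp_all
      · simp [hno.2]
    rcases hex with hx | hx <;> rcases hey with hy | hy
    · exact Or.inl (eq_pair_of hsub' hx (fun h => hnx ⟨hx, h⟩) hy (fun h => hny ⟨hy, h⟩))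
    · refine Or.inr (Or.inl ?_)
      have : M = {var x, neg (var y)} := by
        apply eq_pair_of (p := var x) (q := neg (var x)) (r := neg (var y)) (s := var y)
          (fun f hf => by rcases hsub' f hf with h|h|h|h <;> tauto)
          hx (fun h => hnx ⟨hx, h⟩) hy (fun h => hny ⟨h, hy⟩)
      exact this
    · refine Or.inr (Or.inr (Or.inl ?_))
      apply eq_pair_of (p := neg (var x)) (q := var x) (r := var y) (s := neg (var y))
        (fun f hf => by rcases hsub' f hf with h|h|h|h <;> tauto)
        hx (fun h => hnx ⟨h, hx⟩) hy (fun h => hny ⟨hy, h⟩)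
    · refine Or.inr (Or.inr (Or.inr ?_))
      apply eq_pair_of (p := neg (var x)) (q := var x) (r := neg (var y)) (s := var y)
        (fun f hf => by rcases hsub' f hf with h|h|h|h <;> tauto)
        hx (fun h => hnx ⟨h, hx⟩) hy (fun h => hny ⟨h, hy⟩)
  · have subK : ∀ M : Finset (PropForm V),
        (∀ f ∈ M, f = var x ∨ f = neg (var x) ∨ f = var y ∨ f = neg (var y)) →
        M ⊆ ({var x, neg (var x)} : Finset (PropForm V)) ∪ {var y, neg (var y)} := by
      intro M h f hf
      simp only [Finset.mem_union, Finset.mem_insert, Finset.mem_singleton]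
      have := h f hf
      tauto
    rintro (rfl | rfl | rfl | rfl)
    · refine ⟨subK _ (by intro f hf; simp at hf; tauto), ?_, ?_⟩
      · apply sat_of_not_pairs (x := x) (y := y)
        · intro f hf; simp only [Finset.mem_insert, Finset.mem_singleton] at hf; tauto
        · intro h; have := h.2; simp [hxy, hxy.symm] at this
        · intro h; have := h.2; simp [hxy, hxy.symm] at this
      · intro c hc hcm
        simp only [Finset.mem_union, Finset.mem_insert, Finset.mem_singleton] at hc
        rcases hc with (rfl | rfl) | (rfl | rfl)
        · exact absurd (by simp) hcm
        · exact unsat_both (x := x) (by simp) (by simp)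
        · exact absurd (by simp) hcm
        · exact unsat_both (x := y) (by simp) (by simp)
    · refine ⟨subK _ (by intro f hf; simp at hf; tauto), ?_, ?_⟩
      · apply sat_of_not_pairs (x := x) (y := y)
        · intro f hf; simp only [Finset.mem_insert, Finset.mem_singleton] at hf; tauto
        · intro h; have := h.2; simp [hxy, hxy.symm] at this
        · intro h; have := h.1; simp [hxy, hxy.symm] at this
      · intro c hc hcm
        simp only [Finset.mem_union, Finset.mem_insert, Finset.mem_singleton] at hc
        rcases hc with (rfl | rfl) | (rfl | rfl)
        · exact absurd (by simp) hcm
        · exact unsat_both (x := x) (by simp) (by simp)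
        · exact unsat_both (x := y) (by simp) (by simp)
        · exact absurd (by simp) hcm
    · refine ⟨subK _ (by intro f hf; simp at hf; tauto), ?_, ?_⟩
      · apply sat_of_not_pairs (x := x) (y := y)
        · intro f hf; simp only [Finset.mem_insert, Finset.mem_singleton] at hf; tauto
        · intro h; have := h.1; simp [hxy, hxy.symm] at this
        · intro h; have := h.2; simp [hxy, hxy.symm] at this
      · intro c hc hcm
        simp only [Finset.mem_union, Finset.mem_insert, Finset.mem_singleton] at hc
        rcases hc with (rfl | rfl) | (rfl | rfl)
        · exact unsat_both (x := x) (by simp) (by simp)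
        · exact absurd (by simp) hcm
        · exact absurd (by simp) hcm
        · exact unsat_both (x := y) (by simp) (by simp)
    · refine ⟨subK _ (by intro f hf; simp at hf; tauto), ?_, ?_⟩
      · apply sat_of_not_pairs (x := x) (y := y)
        · intro f hf; simp only [Finset.mem_insert, Finset.mem_singleton] at hf; tauto
        · intro h; have := h.1; simp [hxy, hxy.symm] at this
        · intro h; have := h.1; simp [hxy, hxy.symm] at this
      · intro c hc hcm
        simp only [Finset.mem_union, Finset.mem_insert, Finset.mem_singleton] at hc
        rcases hc with (rfl | rfl) | (rfl | rfl)
        · exact unsat_both (x := x) (by simp) (by simp)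
        · exact absurd (by simp) hcm
        · exact unsat_both (x := y) (by simp) (by simp)
        · exact absurd (by simp) hcm

lemma selfC_of_sat {K : Finset (PropForm V)}
    (h : ∀ f ∈ K, Sat ({f} : Finset (PropForm V))) : selfC K = ∅ := by
  ext f
  simp only [selfC, Set.mem_setOf_eq, Set.mem_empty_iff_false, iff_false, not_and, not_not]
  exact fun hf => h f hf

end Helpers

theorem stmt8 {V : Type} [DecidableEq V] (a b : V) (hab : a ≠ b) :
    let K1 : Finset (PropForm V) := {PropForm.var a, PropForm.neg (PropForm.var a)}
    let K2 : Finset (PropForm V) := {PropForm.var b, PropForm.neg (PropForm.var b)}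
    (MUSes (K1 ∪ K2) = MUSes K1 ∪ MUSes K2) ∧
    Disjoint (MUSes K1) (MUSes K2) ∧
    unfree K1 ∩ unfree K2 = ∅ ∧
    IM (K1 ∪ K2) = 3 ∧ IM K1 + IM K2 = 2 := by
  intro K1 K2
  have hK1 : K1 = {PropForm.var a, PropForm.neg (PropForm.var a)} := rfl
  have hK2 : K2 = {PropForm.var b, PropForm.neg (PropForm.var b)} := rfl
  rw [hK1, hK2]
  open PropForm in
  -- distinctness of the four literals
  have hne12 : ({var a, var b} : Finset (PropForm V)) ≠ {var a, neg (var b)} := by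
    intro h
    have h2 : (var b : PropForm V) ∈ ({var a, neg (var b)} : Finset (PropForm V)) :=
      h ▸ (by simp)
    simp [hab.symm] at h2
  have hne13 : ({var a, var b} : Finset (PropForm V)) ≠ {neg (var a), var b} := by
    intro h
    have h2 : (var a : PropForm V) ∈ ({neg (var a), var b} : Finset (PropForm V)) :=
      h ▸ (by simp)
    simp [hab] at h2
  have hne14 : ({var a, var b} : Finset (PropForm V)) ≠ {neg (var a), neg (var b)} := by
    intro h
    have h2 : (var a : PropForm V) ∈ ({neg (var a), neg (var b)} : Finset (PropForm V)) :=
      h ▸ (by simp)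
    simp at h2
  have hne23 : ({var a, neg (var b)} : Finset (PropForm V)) ≠ {neg (var a), var b} := by
    intro h
    have h2 : (var a : PropForm V) ∈ ({neg (var a), var b} : Finset (PropForm V)) :=
      h ▸ (by simp)
    simp [hab] at h2
  have hne24 : ({var a, neg (var b)} : Finset (PropForm V)) ≠ {neg (var a), neg (var b)} := by
    intro h
    have h2 : (var a : PropForm V) ∈ ({neg (var a), neg (var b)} : Finset (PropForm V)) :=
      h ▸ (by simp)
    simp at h2
  have hne34 : ({neg (var a), var b} : Finset (PropForm V)) ≠ {neg (var a), neg (var b)} := by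
    intro h
    have h2 : (var b : PropForm V) ∈ ({neg (var a), neg (var b)} : Finset (PropForm V)) :=
      h ▸ (by simp)
    simp at h2
  have hKne : ({var a, neg (var a)} : Finset (PropForm V)) ≠ {var b, neg (var b)} := by
    intro h
    have h2 : (var a : PropForm V) ∈ ({var b, neg (var b)} : Finset (PropForm V)) :=
      h ▸ (by simp)
    simp [hab] at h2
  refine ⟨?_, ?_, ?_, ?_, ?_⟩
  · rw [muses_four a b, muses_pair a, muses_pair b, Set.singleton_union]
  · rw [muses_pair a, muses_pair b]
    simpa [Set.disjoint_singleton_left] using hKne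
  · rw [unfree, unfree, muses_pair a, muses_pair b]
    simp only [Set.mem_singleton_iff, Set.iUnion_iUnion_eq_left]
    ext f
    simp only [Set.mem_inter_iff, Finset.coe_insert, Finset.coe_singleton,
      Set.mem_insert_iff, Set.mem_singleton_iff, Set.mem_empty_iff_false, iff_false, not_and]
    rintro (rfl | rfl) <;> simp [hab]
  · rw [IM, msses_four hab, selfC_of_sat ?sing]
    case sing =>
      intro f hf
      simp only [Finset.mem_union, Finset.mem_insert, Finset.mem_singleton] at hf
      rcases hf with (rfl | rfl) | (rfl | rfl)
      exacts [sat_single_var a, sat_single_neg a, sat_single_var b, sat_single_neg b]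
    rw [Set.ncard_insert_of_notMem (by simp [hne12, hne13, hne14]),
      Set.ncard_insert_of_notMem (by simp [hne23, hne24]),
      Set.ncard_insert_of_notMem (by simp [hne34]), Set.ncard_singleton,
      Set.ncard_empty]
    norm_num
  · have hsingA : ({var a} : Finset (PropForm V)) ≠ {neg (var a)} := by simp
    have hsingB : ({var b} : Finset (PropForm V)) ≠ {neg (var b)} := by simp
    rw [IM, IM, msses_pair a, msses_pair b,
      selfC_of_sat (K := ({var a, neg (var a)} : Finset (PropForm V))) ?sa,
      selfC_of_sat (K := ({var b, neg (var b)} : Finset (PropForm V))) ?sb]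
    case sa =>
      intro f hf
      simp only [Finset.mem_insert, Finset.mem_singleton] at hf
      rcases hf with rfl | rfl
      exacts [sat_single_var a, sat_single_neg a]
    case sb =>
      intro f hf
      simp only [Finset.mem_insert, Finset.mem_singleton] at hf
      rcases hf with rfl | rfl
      exacts [sat_single_var b, sat_single_neg b]
    rw [Set.ncard_pair hsingA, Set.ncard_pair hsingB, Set.ncard_empty]
    norm_num
end

section
/- Let K be an inconsistent finite knowledge base and {K₁,…,Kₙ} a distributable MUS-decomposition of K. If for each i, K'ᵢ is a consistent knowledge base obtained from Kᵢ by removing formulas (K'ᵢ ⊆ Kᵢ and K'ᵢ consistent), then K' = K'₁ ∪ ⋯ ∪ K'ₙ is consistent. -/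
/-- A partial MUS-decomposition of `K`: a family of pairwise-disjoint inconsistent
subsets of `K` such that the MUSes of their union are exactly the disjoint union of
the MUSes of the components. -/
def IsPartialMUSdecomp {V : Type} [DecidableEq V] (K : Finset (PropForm V))
    (T : Finset (Finset (PropForm V))) : Prop :=
  (∀ Ki ∈ T, Ki ⊆ K ∧ ¬ Sat Ki) ∧
  (↑T : Set (Finset (PropForm V))).PairwiseDisjoint id ∧
  MUSes (T.sup id) = ⋃ Ki ∈ T, MUSes Ki ∧
  (↑T : Set (Finset (PropForm V))).Pairwise fun A B => Disjoint (MUSes A) (MUSes B)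

/-- The distribution index: maximal cardinality of a partial MUS-decomposition. -/
noncomputable def muD {V : Type} [DecidableEq V] (K : Finset (PropForm V)) : ℕ :=
  sSup {n : ℕ | ∃ T : Finset (Finset (PropForm V)), IsPartialMUSdecomp K T ∧ T.card = n}

/-- A distributable MUS-decomposition: a maximal partial MUS-decomposition in which
each component is a union of MUSes. -/
def IsDistributableMUSdecomp {V : Type} [DecidableEq V] (K : Finset (PropForm V))
    (T : Finset (Finset (PropForm V))) : Prop :=
  IsPartialMUSdecomp K T ∧ T.card = muD K ∧
  ∀ Ki ∈ T, (↑Ki : Set (PropForm V)) = ⋃ M ∈ MUSes Ki, (↑M : Set (PropForm V))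


lemma sat_mono {V : Type} {A B : Finset (PropForm V)} (hAB : A ⊆ B) (hB : Sat B) : Sat A := by
  obtain ⟨v, hv⟩ := hB
  exact ⟨v, fun f hf => hv f (hAB hf)⟩

lemma exists_mus_subset {V : Type} [DecidableEq V] (S : Finset (PropForm V)) (hS : ¬ Sat S) :
    ∃ M ⊆ S, IsMUS M := by
  induction S using Finset.strongInduction with
  | _ S ih =>
    by_cases hall : ∀ S' ⊂ S, Sat S'
    · exact ⟨S, subset_rfl, hS, hall⟩
    · push_neg at hall
      obtain ⟨S', hS', hS'ns⟩ := hall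
      obtain ⟨M, hM, hMmus⟩ := ih S' hS' hS'ns
      exact ⟨M, hM.trans hS'.subset, hMmus⟩

theorem stmt11 {V : Type} [DecidableEq V] (K : Finset (PropForm V)) (h : ¬ Sat K)
    (T : Finset (Finset (PropForm V))) (hT : IsDistributableMUSdecomp K T)
    (K' : Finset (PropForm V) → Finset (PropForm V))
    (hK' : ∀ Ki ∈ T, K' Ki ⊆ Ki ∧ Sat (K' Ki)) :
    Sat (T.sup K') := by
  by_contra h0
  obtain ⟨M, hMsub, hMmus⟩ := exists_mus_subset (T.sup K') h0
  have hMsub' : M ⊆ T.sup id := hMsub.trans (by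
    rw [← Finset.le_iff_subset]
    apply Finset.sup_le
    intro Ki hKi
    exact ((hK' Ki hKi).1).trans (Finset.le_sup (f := id) hKi))
  have hMem : M ∈ MUSes (T.sup id) := ⟨hMsub', hMmus⟩
  rw [hT.1.2.2.1] at hMem
  simp only [Set.mem_iUnion] at hMem
  obtain ⟨Ki, hKiT, hMKi, _⟩ := hMem
  have hMK' : M ⊆ K' Ki := by
    intro f hf
    obtain ⟨Kj, hKjT, hfKj⟩ := Finset.mem_sup.mp (hMsub hf)
    by_cases hij : Kj = Ki
    · exact hij ▸ hfKj
    · exact absurd (hMKi hf) (Finset.disjoint_left.mp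
        (hT.1.2.1 hKjT hKiT hij) ((hK' Kj hKjT).1 hfKj))
  exact hMmus.1 (sat_mono hMK' (hK' Ki hKiT).2)
end

section
/- The distribution-based inconsistency measure I_D, defined as I_D(K) = μ_D(K) for inconsistent K and 0 for consistent K, satisfies Monotony: for all finite knowledge bases K and K', I_D(K) ≤ I_D(K ∪ K'). -/
open Classical in
/-- The distribution-based inconsistency measure. -/
noncomputable def ID {V : Type} [DecidableEq V] (K : Finset (PropForm V)) : ℕ :=
  if Sat K then 0 else muD K


lemma decomp_mono {V : Type} [DecidableEq V] {K L : Finset (PropForm V)}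
    (h : K ⊆ L) {T : Finset (Finset (PropForm V))}
    (hT : IsPartialMUSdecomp K T) : IsPartialMUSdecomp L T := by
  obtain ⟨h1, h2, h3, h4⟩ := hT
  exact ⟨fun Ki hKi => ⟨(h1 Ki hKi).1.trans h, (h1 Ki hKi).2⟩, h2, h3, h4⟩

lemma decomp_bdd {V : Type} [DecidableEq V] (K : Finset (PropForm V)) :
    BddAbove {n : ℕ | ∃ T : Finset (Finset (PropForm V)), IsPartialMUSdecomp K T ∧ T.card = n} := by
  refine ⟨K.powerset.card, fun n hn => ?_⟩
  obtain ⟨T, hT, rfl⟩ := hn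
  exact Finset.card_le_card fun Ki hKi =>
    Finset.mem_powerset.mpr (hT.1 Ki hKi).1

theorem stmt12 {V : Type} [DecidableEq V] (K K' : Finset (PropForm V)) :
    ID K ≤ ID (K ∪ K') := by
  by_cases hK : Sat K
  · simp [ID, hK]
  · have hKL : ¬ Sat (K ∪ K') := fun ⟨v, hv⟩ =>
      hK ⟨v, fun f hf => hv f (Finset.mem_union_left _ hf)⟩
    simp only [ID, if_neg hK, if_neg hKL]
    apply csSup_le_csSup (decomp_bdd _)
    · exact ⟨0, ∅, ⟨by simp, by simp, by
        ext M
        simp only [Finset.sup_empty, MUSes, IsMUS, Set.mem_setOf_eq,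
          Finset.mem_biUnion, Set.mem_iUnion, Finset.notMem_empty, Set.iUnion_of_empty,
          Set.iUnion_empty, Set.mem_empty_iff_false, iff_false, Finset.bot_eq_empty]
        rintro ⟨hsub, hns, -⟩
        exact hns ⟨fun _ => true, fun f hf => absurd (hsub hf) (Finset.notMem_empty f)⟩, by simp⟩, rfl⟩
    · rintro n ⟨T, hT, rfl⟩
      exact ⟨T, decomp_mono Finset.subset_union_left hT, rfl⟩
end

section
/- The distribution-based inconsistency measure I_D satisfies MinInc: if M is a minimal unsatisfiable subset of some knowledge base (i.e., M is inconsistent and every proper subset is consistent), then I_D(M) = 1. -/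
theorem stmt14 {V : Type} [DecidableEq V] (M : Finset (PropForm V)) (hM : IsMUS M) :
    ID M = 1 := by
  have hfull : ∀ A : Finset (PropForm V), A ⊆ M → ¬ Sat A → A = M := by
    intro A hAM hA
    by_contra hne
    exact hA (hM.2 A (lt_of_le_of_ne hAM hne))
  have hdecomp : IsPartialMUSdecomp M {M} := by
    refine ⟨?_, ?_, ?_, ?_⟩
    · intro Ki hKi
      simp only [Finset.mem_singleton] at hKi
      subst hKi
      exact ⟨le_refl _, hM.1⟩
    · simp [Set.PairwiseDisjoint]
    · simp
    · simp
  have hmem : 1 ∈ {n : ℕ | ∃ T : Finset (Finset (PropForm V)),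
      IsPartialMUSdecomp M T ∧ T.card = n} := ⟨{M}, hdecomp, Finset.card_singleton M⟩
  have hbound : ∀ n ∈ {n : ℕ | ∃ T : Finset (Finset (PropForm V)),
      IsPartialMUSdecomp M T ∧ T.card = n}, n ≤ 1 := by
    rintro n ⟨T, ⟨hsub, _, _, _⟩, rfl⟩
    by_contra h
    push_neg at h
    obtain ⟨A, hA, B, hB, hAB⟩ := Finset.one_lt_card.mp h
    have hA' := hfull A (hsub A hA).1 (hsub A hA).2
    have hB' := hfull B (hsub B hB).1 (hsub B hB).2
    exact hAB (hA'.trans hB'.symm)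
  have : muD M = 1 := by
    unfold muD
    exact le_antisymm (csSup_le ⟨1, hmem⟩ hbound) (le_csSup ⟨1, hbound⟩ hmem)
  simp [ID, hM.1, this]
end

section
/- For every inconsistent finite knowledge base K, the distribution index is at most the minimum hitting-set size of its MUSes: μ_D(K) ≤ δ_hs(K), where δ_hs(K) is the minimum cardinality of a hitting set of MUSes(K). -/
/-- The minimum cardinality of a hitting set of the MUSes of `K`. -/
noncomputable def deltaHS {V : Type} [DecidableEq V] (K : Finset (PropForm V)) : ℕ :=
  sInf {n : ℕ | ∃ H : Finset (PropForm V),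
    H ⊆ K ∧ (∀ M ∈ MUSes K, (H ∩ M).Nonempty) ∧ H.card = n}

lemma exists_mus_of_unsat {V : Type} [DecidableEq V] :
    ∀ (K : Finset (PropForm V)), ¬ Sat K → ∃ M ⊆ K, IsMUS M := by
  intro K
  induction K using Finset.strongInductionOn with
  | _ K ih =>
    intro hK
    by_cases h : ∀ M' ⊂ K, Sat M'
    · exact ⟨K, Finset.Subset.refl K, hK, h⟩
    · push_neg at h
      obtain ⟨K', hK', hns⟩ := h
      obtain ⟨M, hM, hmus⟩ := ih K' hK' hns
      exact ⟨M, hM.trans hK'.subset, hmus⟩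

lemma mus_nonempty {V : Type} {M : Finset (PropForm V)} (h : IsMUS M) : M.Nonempty := by
  rcases Finset.eq_empty_or_nonempty M with rfl | hne
  · exact absurd ⟨fun _ => true, by simp⟩ h.1
  · exact hne

theorem stmt16 {V : Type} [DecidableEq V] (K : Finset (PropForm V)) (hK : ¬ Sat K) :
    muD K ≤ deltaHS K := by
  -- the hitting-set value is attained
  have hne : {n : ℕ | ∃ H : Finset (PropForm V),
      H ⊆ K ∧ (∀ M ∈ MUSes K, (H ∩ M).Nonempty) ∧ H.card = n}.Nonempty := by
    refine ⟨K.card, K, Finset.Subset.refl K, ?_, rfl⟩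
    intro M hM
    obtain ⟨hMK, hmus⟩ := hM
    obtain ⟨f, hf⟩ := mus_nonempty hmus
    exact ⟨f, Finset.mem_inter.mpr ⟨hMK hf, hf⟩⟩
  obtain ⟨H, hHK, hhit, hcard⟩ := Nat.sInf_mem hne
  rw [deltaHS, ← hcard]
  apply csSup_le'
  rintro n ⟨T, ⟨hsub, hdisj, _⟩, rfl⟩
  -- choose for each Ki an element of H ∩ Ki
  have hchoice : ∀ Ki ∈ T, ∃ f, f ∈ H ∧ f ∈ Ki := by
    intro Ki hKi
    obtain ⟨hKiK, hKins⟩ := hsub Ki hKi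
    obtain ⟨M, hMKi, hmus⟩ := exists_mus_of_unsat Ki hKins
    obtain ⟨f, hf⟩ := hhit M ⟨hMKi.trans hKiK, hmus⟩
    rw [Finset.mem_inter] at hf
    exact ⟨f, hf.1, hMKi hf.2⟩
  choose g hgH hgKi using hchoice
  classical
  rcases Finset.eq_empty_or_nonempty T with rfl | ⟨K0, hK0⟩
  · simp
  have hf0 : ∃ f0, f0 ∈ H := ⟨g K0 hK0, hgH K0 hK0⟩
  obtain ⟨f0, _⟩ := hf0
  have key : ∀ Ki, ∀ h : Ki ∈ T,
      (fun Ki => if h : Ki ∈ T then g Ki h else f0) Ki = g Ki h := by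
    intro Ki h; simp [h]
  refine Finset.card_le_card_of_injOn (fun Ki => if h : Ki ∈ T then g Ki h else f0)
    (fun Ki hKi => ?_) (fun A hA B hB hAB => ?_)
  · rw [key Ki hKi]; exact hgH Ki hKi
  · simp only [Finset.mem_coe] at hA hB
    rw [key A hA, key B hB] at hAB
    by_contra hne'
    have hd := hdisj hA hB hne'
    exact (Finset.disjoint_left.mp hd (hgKi A hA)) (hAB ▸ hgKi B hB)
end

section
/- Reduction from set packing to closed set packing: let U be a finite universe, S = {S₁,…,Sₙ} a family of subsets of U, and e₁,…,eₙ distinct elements not in U. Define U' = U ∪ {e₁,…,eₙ} and S' = {S₁ ∪ {e₁}, …, Sₙ ∪ {eₙ}}. Then P ⊆ S is a maximum-cardinality set packing of (U,S) if and only if P' = {Sᵢ ∪ {eᵢ} : Sᵢ ∈ P} is a maximum-cardinality closed set packing of (U', S'). -/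
/-- `P` (a set of indices) is a set packing of the family `S`: the selected sets are
pairwise disjoint. -/
def IsSetPacking {α : Type} [DecidableEq α] {n : ℕ} (S : Fin n → Finset α)
    (P : Finset (Fin n)) : Prop :=
  ∀ i ∈ P, ∀ j ∈ P, i ≠ j → Disjoint (S i) (S j)

/-- A closed set packing: a set packing such that no unselected member of the family
is contained in the union of the selected ones. -/
def IsClosedSetPacking {α : Type} [DecidableEq α] {n : ℕ} (S : Fin n → Finset α)
    (P : Finset (Fin n)) : Prop :=
  IsSetPacking S P ∧ ∀ j, j ∉ P → ¬ S j ⊆ P.sup S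

/-- A maximum-cardinality set packing. -/
def IsMaxSetPacking {α : Type} [DecidableEq α] {n : ℕ} (S : Fin n → Finset α)
    (P : Finset (Fin n)) : Prop :=
  IsSetPacking S P ∧ ∀ Q, IsSetPacking S Q → Q.card ≤ P.card

/-- A maximum-cardinality closed set packing. -/
def IsMaxClosedSetPacking {α : Type} [DecidableEq α] {n : ℕ} (S : Fin n → Finset α)
    (P : Finset (Fin n)) : Prop :=
  IsClosedSetPacking S P ∧ ∀ Q, IsClosedSetPacking S Q → Q.card ≤ P.card

theorem stmt18 {α : Type} [DecidableEq α] {n : ℕ} (U : Finset α)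
    (S : Fin n → Finset α) (hS : ∀ i, S i ⊆ U)
    (e : Fin n → α) (he : Function.Injective e) (heU : ∀ i, e i ∉ U)
    (P : Finset (Fin n)) :
    IsMaxSetPacking S P ↔ IsMaxClosedSetPacking (fun i => insert (e i) (S i)) P := by
  set S' : Fin n → Finset α := fun i => insert (e i) (S i) with hS'
  -- packing equivalence for any Q
  have hpack : ∀ Q : Finset (Fin n), IsSetPacking S Q ↔ IsSetPacking S' Q := by
    intro Q
    constructor
    · intro h i hi j hj hij
      have hdij : Disjoint (S i) (S j) := h i hi j hj hij
      rw [Finset.disjoint_left]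
      intro a ha hb
      simp only [hS', Finset.mem_insert] at ha hb
      rcases ha with ha | ha <;> rcases hb with hb | hb
      · exact hij (he (ha ▸ hb))
      · exact heU i (hS j (ha ▸ hb))
      · exact heU j (hS i (hb ▸ ha))
      · exact (Finset.disjoint_left.mp hdij ha) hb
    · intro h i hi j hj hij
      exact (h i hi j hj hij).mono (Finset.subset_insert _ _) (Finset.subset_insert _ _)
  -- closedness is automatic for S'
  have hclosed : ∀ Q : Finset (Fin n), IsSetPacking S' Q → IsClosedSetPacking S' Q := by
    intro Q hQ
    refine ⟨hQ, ?_⟩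
    intro j hj hsub
    have hej : e j ∈ Q.sup S' := hsub (by simp [hS'])
    rw [Finset.mem_sup] at hej
    obtain ⟨i, hi, hei⟩ := hej
    simp only [hS', Finset.mem_insert] at hei
    rcases hei with hei | hei
    · exact hj (he hei ▸ hi)
    · exact heU j (hS i hei)
  constructor
  · rintro ⟨hP, hmax⟩
    refine ⟨hclosed P ((hpack P).mp hP), ?_⟩
    intro Q hQ
    exact hmax Q ((hpack Q).mpr hQ.1)
  · rintro ⟨hP, hmax⟩
    refine ⟨(hpack P).mpr hP.1, ?_⟩
    intro Q hQ
    exact hmax Q (hclosed Q ((hpack Q).mp hQ))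
end
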